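/- Let G be a connected graph and let S ⊆ V(G) be such that the number of connected components of G - S is at least |S| + 2. Then the path eccentricity of G is at least the minimum, over all components C of G - S, of the maximum distance in G from a vertex of C to the set S. -/

import Mathlib

open SimpleGraph

variable {V : Type*} [Fintype V] [DecidableEq V]

/-- Distance from a vertex `u` to the vertex set of a walk `P`. -/
noncomputable def walkDist (G : SimpleGraph V) {a b : V} (P : G.Walk a b) (u : V) : ℕ :=
  P.support.toFinset.inf' ⟨a, List.mem_toFinset.mpr P.start_mem_support⟩ (fun x => G.dist u x)

/-- Eccentricity of a walk: max distance from any vertex of `G` to the walk. -/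
noncomputable def eccW (G : SimpleGraph V) {a b : V} (P : G.Walk a b) : ℕ :=
  Finset.univ.sup (walkDist G P)

/-- Path eccentricity of a graph. -/
noncomputable def pe (G : SimpleGraph V) : ℕ :=
  sInf {m | ∃ (a b : V) (P : G.Walk a b), P.IsPath ∧ eccW G P = m}

/-- `P` is a longest path in `G`. -/
def IsLongestPath (G : SimpleGraph V) {a b : V} (P : G.Walk a b) : Prop :=
  P.IsPath ∧ ∀ (c d : V) (Q : G.Walk c d), Q.IsPath → Q.length ≤ P.length

/-- `G` is `k`-connected. -/
def KConnected (k : ℕ) (G : SimpleGraph V) : Prop :=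
  k + 1 ≤ Fintype.card V ∧
    ∀ S : Finset V, S.card < k → (G.induce ((↑S : Set V)ᶜ)).Connected

/-- A walk avoiding `S` stays within one component of the induced graph on `Sᶜ`. -/
lemma reach_of_no_S {G : SimpleGraph V} {S : Finset V} :
    ∀ {u p : V} (W : G.Walk u p), (∀ x ∈ W.support, x ∉ S) →
    ∀ (hu : u ∈ ((↑S : Set V)ᶜ)) (hp : p ∈ ((↑S : Set V)ᶜ)),
    (G.induce ((↑S : Set V)ᶜ)).Reachable ⟨u, hu⟩ ⟨p, hp⟩ := by
  intro u p W
  induction W with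
  | nil => intro _ hu hp; exact Reachable.refl _
  | @cons a b c h W ih =>
    intro hS hu hp
    have hb : b ∉ S := hS b (by simp [SimpleGraph.Walk.support_cons, W.start_mem_support])
    have hb' : b ∈ ((↑S : Set V)ᶜ) := by simpa using hb
    have hadj : (G.induce ((↑S : Set V)ᶜ)).Adj ⟨a, hu⟩ ⟨b, hb'⟩ := by
      simpa [SimpleGraph.comap_adj] using h
    exact hadj.reachable.trans (ih (fun x hx => hS x (by simp [SimpleGraph.Walk.support_cons, hx])) hb' hp)

/-- Counting lemma: a walk meets few "component classes". -/
lemma count_comps {G : SimpleGraph V} {S : Finset V} {α : Type*} [DecidableEq α] (g : V → α)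
    (hadj : ∀ x y, G.Adj x y → x ∉ S → y ∉ S → g x = g y) :
    ∀ {a b : V} (W : G.Walk a b),
    ((W.support.filter (fun x => x ∉ S)).map g).toFinset.card
      ≤ (W.support.filter (fun x => x ∈ S)).length + (if a ∈ S then 0 else 1) := by
  intro a b W
  induction W with
  | nil =>
    rename_i u
    by_cases h : u ∈ S <;> simp [SimpleGraph.Walk.support_nil, h]
  | @cons a b c h W ih =>
    by_cases ha : a ∈ S
    · have : ((Walk.cons h W).support.filter (fun x => x ∉ S)).map g
          = ((W.support.filter (fun x => x ∉ S)).map g) := by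
        simp [SimpleGraph.Walk.support_cons, ha]
      rw [this]
      have h2 : ((Walk.cons h W).support.filter (fun x => x ∈ S)).length
          = (W.support.filter (fun x => x ∈ S)).length + 1 := by
        simp [SimpleGraph.Walk.support_cons, ha]
      rw [h2]
      have : (if b ∈ S then 0 else 1) ≤ 1 := by split <;> omega
      simp only [if_pos ha]
      omega
    · have hfil : ((Walk.cons h W).support.filter (fun x => x ∉ S)).map g
          = g a :: ((W.support.filter (fun x => x ∉ S)).map g) := by
        simp [SimpleGraph.Walk.support_cons, ha]
      have hlen : ((Walk.cons h W).support.filter (fun x => x ∈ S)).length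
          = (W.support.filter (fun x => x ∈ S)).length := by
        simp [SimpleGraph.Walk.support_cons, ha]
      rw [hfil, hlen, List.toFinset_cons, if_neg ha]
      by_cases hb : b ∈ S
      · have := ih
        rw [if_pos hb] at this
        calc (insert (g a) ((W.support.filter (fun x => x ∉ S)).map g).toFinset).card
            ≤ ((W.support.filter (fun x => x ∉ S)).map g).toFinset.card + 1 :=
              Finset.card_insert_le _ _
          _ ≤ (W.support.filter (fun x => x ∈ S)).length + 1 := by omega
      · have hgab : g a = g b := hadj a b h ha hb
        have hbmem : g a ∈ ((W.support.filter (fun x => x ∉ S)).map g).toFinset := by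
          rw [hgab]
          exact List.mem_toFinset.mpr (List.mem_map_of_mem (f := g)
            (List.mem_filter.mpr ⟨W.start_mem_support, by simpa using hb⟩))
        rw [Finset.insert_eq_self.mpr hbmem]
        have := ih
        rw [if_neg hb] at this
        exact this

theorem stmt0 (G : SimpleGraph V) (hG : G.Connected) (S : Finset V)
    (h : S.card + 2 ≤ Nat.card ((G.induce ((↑S : Set V)ᶜ)).ConnectedComponent)) :
    (⨅ C : (G.induce ((↑S : Set V)ᶜ)).ConnectedComponent,
        ⨆ u : C.supp, S.inf (fun x => (G.dist u.1.1 x : ℕ∞))) ≤ (pe G : ℕ∞) := by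
  classical
  set α := (G.induce ((↑S : Set V)ᶜ)).ConnectedComponent with hα
  have hαne : Nonempty α := by
    have : 0 < Nat.card α := by omega
    exact (Nat.card_pos_iff.mp this).1
  -- the component map, with junk value on S
  let g : V → α := fun x =>
    if hx : x ∈ ((↑S : Set V)ᶜ) then (G.induce ((↑S : Set V)ᶜ)).connectedComponentMk ⟨x, hx⟩
    else Classical.arbitrary α
  have hg : ∀ x (hx : x ∈ ((↑S : Set V)ᶜ)),
      g x = (G.induce ((↑S : Set V)ᶜ)).connectedComponentMk ⟨x, hx⟩ := by
    intro x hx; exact dif_pos hx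
  have hadj : ∀ x y, G.Adj x y → x ∉ S → y ∉ S → g x = g y := by
    intro x y hxy hx hy
    have hx' : x ∈ ((↑S : Set V)ᶜ) := by simpa using hx
    have hy' : y ∈ ((↑S : Set V)ᶜ) := by simpa using hy
    rw [hg x hx', hg y hy']
    exact ConnectedComponent.sound (Adj.reachable (by simpa [SimpleGraph.comap_adj] using hxy))
  -- a path realizing pe
  have hne : {m | ∃ (a b : V) (P : G.Walk a b), P.IsPath ∧ eccW G P = m}.Nonempty := by
    obtain ⟨v⟩ := hG.nonempty
    exact ⟨_, v, v, Walk.nil, Walk.IsPath.nil, rfl⟩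
  obtain ⟨a, b, P, hP, hPe⟩ := Nat.sInf_mem hne
  -- counting
  have h1 : (P.support.filter (fun x => x ∈ S)).length ≤ S.card := by
    have hnd : (P.support.filter (fun x => x ∈ S)).Nodup := hP.support_nodup.filter _
    rw [← List.toFinset_card_of_nodup hnd]
    refine Finset.card_le_card ?_
    intro x hx
    simp only [List.mem_toFinset, List.mem_filter, decide_eq_true_eq] at hx
    exact hx.2
  have h2 := count_comps (G := G) (S := S) g hadj P
  have h3 : ((P.support.filter (fun x => x ∉ S)).map g).toFinset.card < Nat.card α := by
    have : (if a ∈ S then 0 else 1) ≤ 1 := by split <;> omega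
    omega
  have hC : ∃ C : α, C ∉ ((P.support.filter (fun x => x ∉ S)).map g).toFinset := by
    by_contra hcon
    push_neg at hcon
    have hft : Fintype α := Fintype.ofFinite α
    have := Finset.card_le_card (fun C _ => hcon C : (Finset.univ : Finset α) ⊆ _)
    rw [Finset.card_univ, ← Nat.card_eq_fintype_card] at this
    omega
  obtain ⟨C, hCmem⟩ := hC
  refine le_trans (iInf_le _ C) ?_
  refine iSup_le fun u => ?_
  obtain ⟨⟨v, hv⟩, hvC⟩ := u
  have hvC' : (G.induce ((↑S : Set V)ᶜ)).connectedComponentMk ⟨v, hv⟩ = C := hvC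
  -- find the nearest vertex p on P
  obtain ⟨p, hpmem, hpd⟩ := Finset.exists_mem_eq_inf'
    (⟨a, List.mem_toFinset.mpr P.start_mem_support⟩ : P.support.toFinset.Nonempty)
    (fun x => G.dist v x)
  have hwd : walkDist G P v = G.dist v p := hpd
  have hp_supp : p ∈ P.support := List.mem_toFinset.mp hpmem
  -- key: some vertex of S is at distance ≤ dist v p from v
  have key : ∃ s ∈ S, G.dist v s ≤ G.dist v p := by
    by_cases hpS : p ∈ S
    · exact ⟨p, hpS, le_refl _⟩
    · obtain ⟨W, hW⟩ := (hG.preconnected v p).exists_walk_length_eq_dist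
      have hsex : ∃ s ∈ W.support, s ∈ S := by
        by_contra hcon
        push_neg at hcon
        have hp' : p ∈ ((↑S : Set V)ᶜ) := by simpa using hpS
        have hreach := reach_of_no_S W hcon hv hp'
        have : g p = C := by
          rw [hg p hp', ← hvC']
          exact (ConnectedComponent.sound hreach).symm
        exact hCmem (List.mem_toFinset.mpr (this ▸ List.mem_map_of_mem (f := g)
          (List.mem_filter.mpr ⟨hp_supp, by simpa using hpS⟩)))
      obtain ⟨s, hsW, hsS⟩ := hsex
      refine ⟨s, hsS, ?_⟩
      calc G.dist v s ≤ (W.takeUntil s hsW).length := SimpleGraph.dist_le _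
        _ ≤ W.length := Walk.length_takeUntil_le W hsW
        _ = G.dist v p := hW
  obtain ⟨s, hsS, hsd⟩ := key
  calc S.inf (fun x => (G.dist v x : ℕ∞)) ≤ (G.dist v s : ℕ∞) := Finset.inf_le hsS
    _ ≤ (G.dist v p : ℕ∞) := by exact_mod_cast hsd
    _ = (walkDist G P v : ℕ∞) := by rw [hwd]
    _ ≤ (eccW G P : ℕ∞) := by
        exact_mod_cast Finset.le_sup (f := walkDist G P) (Finset.mem_univ v)
    _ = (pe G : ℕ∞) := by rw [hPe]; rfl
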